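/- arXiv:1208.2557 — 3 statements merged into one kernel-verified Lean document; each statement's English description precedes it below -/
import Mathlib

section
/- Let K be a sub-Markov kernel on an interval E with continuous density k, and let h be an eigenfunction of K with eigenvalue λ = e^{-u}. Suppose A ⊆ E satisfies |e^{-u}| > γ(A) := sup_{x∈E∖A} P_x[X_1 ∈ E∖A]. Then h(x) = E_x[e^{u τ_A} h(X_{τ_A}) 1_{τ_A < ∞}] for all x ∈ E, where τ_A = inf{t ≥ 1 : X_t ∈ A}. -/
open MeasureTheory ProbabilityTheory

/-- `hitE κ E A h n x = E_x[h(X_{τ_A}) 1_{τ_A = n+1}]`: expectation of `h` at the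
first-return location, on the event that the first return to `A` occurs at time `n+1`. -/
noncomputable def hitE (κ : Kernel ℝ ℝ) (E A : Set ℝ) (h : ℝ → ℂ) : ℕ → ℝ → ℂ
  | 0, x => ∫ y in A, h y ∂(κ x)
  | n+1, x => ∫ y in E \ A, hitE κ E A h n y ∂(κ x)

/-- Remainder: `Raux κ E A h n x = E_x[h(X_n) 1_{X_1,…,X_n ∈ E∖A}]`. -/
noncomputable def Raux (κ : Kernel ℝ ℝ) (E A : Set ℝ) (h : ℝ → ℂ) : ℕ → ℝ → ℂ
  | 0, x => h x
  | n+1, x => ∫ y in E \ A, Raux κ E A h n y ∂(κ x)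

/-- If `h` is a (bounded, measurable) eigenfunction of `K` with eigenvalue `λ = e^{-u}`,
and `A ⊆ E` satisfies `|e^{-u}| > γ(A) = sup_{x∈E∖A} P_x[X_1 ∈ E∖A]`, then
`h(x) = E_x[e^{uτ_A} h(X_{τ_A}) 1_{τ_A<∞}] = Σ_{n≥0} e^{u(n+1)} E_x[h(X_{n+1}) 1_{τ_A=n+1}]`
for all `x ∈ E`. -/
theorem stmt2 (κ : Kernel ℝ ℝ) (E A : Set ℝ) (hE : MeasurableSet E)
    (hA : MeasurableSet A) (hAE : A ⊆ E)
    (hsub : ∀ x, (κ x) Set.univ ≤ 1)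
    (h : ℝ → ℂ) (hmeas : Measurable h) (hbdd : ∃ M : ℝ, ∀ x, ‖h x‖ ≤ M)
    (u : ℂ) (heig : ∀ x ∈ E, (∫ y in E, h y ∂(κ x)) = Complex.exp (-u) * h x)
    (γ : ℝ) (hγ0 : 0 ≤ γ)
    (hγ : ∀ x ∈ E \ A, ((κ x) (E \ A)).toReal ≤ γ)
    (hu : γ < ‖Complex.exp (-u)‖) :
    ∀ x ∈ E, h x = ∑' n : ℕ, Complex.exp (u * ((n : ℂ) + 1)) * hitE κ E A h n x := by
  haveI : IsFiniteKernel κ := ⟨⟨1, ENNReal.one_lt_top, hsub⟩⟩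
  obtain ⟨M, hM⟩ := hbdd
  have hM' : ∀ x, ‖h x‖ ≤ M := fun x => by
    simpa using hM x
  have hM0 : 0 ≤ M := le_trans (norm_nonneg _) (hM' 0)
  have hEA : MeasurableSet (E \ A) := hE.diff hA
  have hfin : ∀ x (s : Set ℝ), (κ x) s < ⊤ := fun x s =>
    lt_of_le_of_lt ((measure_mono (Set.subset_univ _)).trans (hsub x)) ENNReal.one_lt_top
  have htoReal : ∀ x (s : Set ℝ), ((κ x) s).toReal ≤ 1 := fun x s => by
    have := (measure_mono (Set.subset_univ s)).trans (hsub x)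
    simpa using ENNReal.toReal_mono ENNReal.one_ne_top this
  -- generic boundedness ⇒ integrability
  have hint : ∀ (f : ℝ → ℂ), Measurable f → (∀ y, ‖f y‖ ≤ M) →
      ∀ x (s : Set ℝ), IntegrableOn f s (κ x) := by
    intro f hf hb x s
    haveI : IsFiniteMeasure (κ x) := ⟨hfin x _⟩
    exact ((integrable_const M).mono' hf.aestronglyMeasurable
      (Filter.Eventually.of_forall hb)).integrableOn
  -- measurability of Raux and hitE
  have hker : ∀ (f : ℝ → ℂ), Measurable f → ∀ (s : Set ℝ), MeasurableSet s →
      Measurable (fun x => ∫ y in s, f y ∂(κ x)) := by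
    intro f hf s hs
    have h1 : StronglyMeasurable (fun p : ℝ × ℝ => s.indicator f p.2) :=
      ((hf.indicator hs).stronglyMeasurable).comp_measurable measurable_snd
    have h2 := h1.integral_kernel_prod_right' (κ := κ)
    have : (fun x => ∫ y in s, f y ∂(κ x)) = fun x => ∫ y, s.indicator f y ∂(κ x) := by
      funext x; rw [integral_indicator hs]
    rw [this]
    exact h2.measurable
  have hmR : ∀ n, Measurable (Raux κ E A h n) := by
    intro n; induction n with
    | zero => exact hmeas
    | succ n ih => exact hker _ ih _ hEA
  have hmH : ∀ n, Measurable (hitE κ E A h n) := by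
    intro n; induction n with
    | zero => exact hker _ hmeas _ hA
    | succ n ih => exact hker _ ih _ hEA
  -- uniform bounds
  have hbR : ∀ n x, ‖Raux κ E A h n x‖ ≤ M := by
    intro n; induction n with
    | zero => exact hM'
    | succ n ih =>
      intro x
      calc ‖Raux κ E A h (n+1) x‖
          ≤ M * ((κ x) (E \ A)).toReal :=
            norm_setIntegral_le_of_norm_le_const (hfin x _) (fun y _ => ih y)
        _ ≤ M * 1 := by
            exact mul_le_mul_of_nonneg_left (htoReal x _) hM0
        _ = M := mul_one M
  have hbH : ∀ n x, ‖hitE κ E A h n x‖ ≤ M := by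
    intro n; induction n with
    | zero =>
      intro x
      calc ‖hitE κ E A h 0 x‖
          ≤ M * ((κ x) A).toReal :=
            norm_setIntegral_le_of_norm_le_const (hfin x _) (fun y _ => hM' y)
        _ ≤ M * 1 := mul_le_mul_of_nonneg_left (htoReal x _) hM0
        _ = M := mul_one M
    | succ n ih =>
      intro x
      calc ‖hitE κ E A h (n+1) x‖
          ≤ M * ((κ x) (E \ A)).toReal :=
            norm_setIntegral_le_of_norm_le_const (hfin x _) (fun y _ => ih y)
        _ ≤ M * 1 := mul_le_mul_of_nonneg_left (htoReal x _) hM0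
        _ = M := mul_one M
  -- step relation
  have hstep : ∀ n, ∀ x ∈ E, Complex.exp (-u) * Raux κ E A h n x
      = hitE κ E A h n x + Raux κ E A h (n+1) x := by
    intro n
    induction n with
    | zero =>
      intro x hx
      have hsplit : (∫ y in E, h y ∂(κ x))
          = (∫ y in A, h y ∂(κ x)) + ∫ y in E \ A, h y ∂(κ x) := by
        rw [← setIntegral_union Set.disjoint_sdiff_right hEA
          (hint h hmeas hM' x A) (hint h hmeas hM' x (E \ A)),
          Set.union_diff_cancel hAE]
      have := heig x hx
      simp only [Raux, hitE]
      rw [← this, hsplit]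
    | succ n ih =>
      intro x hx
      have hcong : (∫ y in E \ A, Complex.exp (-u) * Raux κ E A h n y ∂(κ x))
          = ∫ y in E \ A, (hitE κ E A h n y + Raux κ E A h (n+1) y) ∂(κ x) := by
        apply setIntegral_congr_fun hEA
        intro y hy
        exact ih y hy.1
      calc Complex.exp (-u) * Raux κ E A h (n+1) x
          = ∫ y in E \ A, Complex.exp (-u) * Raux κ E A h n y ∂(κ x) := by
            simp only [Raux]; rw [integral_const_mul]
        _ = ∫ y in E \ A, (hitE κ E A h n y + Raux κ E A h (n+1) y) ∂(κ x) := hcong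
        _ = (∫ y in E \ A, hitE κ E A h n y ∂(κ x))
            + ∫ y in E \ A, Raux κ E A h (n+1) y ∂(κ x) :=
            integral_add (hint _ (hmH n) (hbH n) x _) (hint _ (hmR (n+1)) (hbR (n+1)) x _)
        _ = hitE κ E A h (n+1) x + Raux κ E A h (n+2) x := by simp only [hitE, Raux]
  -- geometric decay on E \ A, hence on E after one step
  have hdR : ∀ n, ∀ y ∈ E \ A, ‖Raux κ E A h n y‖ ≤ M * γ ^ n := by
    intro n; induction n with
    | zero => intro y _; simpa [Raux] using hM' y
    | succ n ih =>
      intro y hy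
      calc ‖Raux κ E A h (n+1) y‖
          ≤ (M * γ ^ n) * ((κ y) (E \ A)).toReal :=
            norm_setIntegral_le_of_norm_le_const (hfin y _) (fun z hz => ih z hz)
        _ ≤ (M * γ ^ n) * γ := by
            refine mul_le_mul_of_nonneg_left (hγ y hy) ?_
            positivity
        _ = M * γ ^ (n+1) := by ring
  have hdRE : ∀ n, ∀ x ∈ E, ‖Raux κ E A h (n+1) x‖ ≤ M * γ ^ n := by
    intro n x _
    calc ‖Raux κ E A h (n+1) x‖
        ≤ (M * γ ^ n) * ((κ x) (E \ A)).toReal :=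
          norm_setIntegral_le_of_norm_le_const (hfin x _) (fun z hz => hdR n z hz)
      _ ≤ (M * γ ^ n) * 1 := by
          refine mul_le_mul_of_nonneg_left (htoReal x _) ?_; positivity
      _ = M * γ ^ n := mul_one _
  have hdH : ∀ n, ∀ y ∈ E \ A, ‖hitE κ E A h n y‖ ≤ M * γ ^ n := by
    intro n
    induction n with
    | zero => intro y _; simpa using hbH 0 y
    | succ n ih =>
      intro y hy
      calc ‖hitE κ E A h (n+1) y‖
          ≤ (M * γ ^ n) * ((κ y) (E \ A)).toReal :=
            norm_setIntegral_le_of_norm_le_const (hfin y _)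
              (fun z hz => ih z hz)
        _ ≤ (M * γ ^ n) * γ := by
            refine mul_le_mul_of_nonneg_left (hγ y hy) ?_; positivity
        _ = M * γ ^ (n+1) := by ring
  have hdHE : ∀ n, ∀ x ∈ E, ‖hitE κ E A h (n+1) x‖ ≤ M * γ ^ n := by
    intro n x _
    calc ‖hitE κ E A h (n+1) x‖
        ≤ (M * γ ^ n) * ((κ x) (E \ A)).toReal :=
          norm_setIntegral_le_of_norm_le_const (hfin x _)
            (fun z hz => hdH n z hz)
      _ ≤ (M * γ ^ n) * 1 := by
          refine mul_le_mul_of_nonneg_left (htoReal x _) ?_; positivity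
      _ = M * γ ^ n := mul_one _
  -- exponential facts
  have heu : (0:ℝ) < ‖Complex.exp u‖ :=
    norm_pos_iff.mpr (Complex.exp_ne_zero u)
  have hprod : ‖Complex.exp (-u)‖ * ‖Complex.exp u‖ = 1 := by
    rw [← norm_mul, ← Complex.exp_add]
    simp
  set r : ℝ := γ * ‖Complex.exp u‖ with hrdef
  have hr0 : 0 ≤ r := mul_nonneg hγ0 heu.le
  have hr1 : r < 1 := by
    calc r < ‖Complex.exp (-u)‖ * ‖Complex.exp u‖ :=
          mul_lt_mul_of_pos_right hu heu
      _ = 1 := hprod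
  have habs : ∀ m : ℕ, ‖Complex.exp (u * (m:ℂ))‖
      = ‖Complex.exp u‖ ^ m := by
    intro m
    rw [mul_comm, Complex.exp_nat_mul, norm_pow]
  intro x hx
  set f : ℕ → ℂ := fun n => Complex.exp (u * ((n : ℂ) + 1)) * hitE κ E A h n x with hf
  have hnormf : ∀ n : ℕ, ‖f n‖
      = ‖Complex.exp u‖ ^ (n+1) * ‖hitE κ E A h n x‖ := by
    intro n
    have : ((n : ℂ) + 1) = ((n + 1 : ℕ) : ℂ) := by push_cast; ring
    rw [hf]
    simp only [norm_mul, this, habs (n+1)]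
  have hsummable : Summable f := by
    rw [← summable_nat_add_iff 1]
    apply Summable.of_norm
    have hgeom : Summable (fun n : ℕ => (M * ‖Complex.exp u‖ ^ 2) * r ^ n) :=
      (summable_geometric_of_lt_one hr0 hr1).mul_left _
    refine Summable.of_nonneg_of_le (fun n => norm_nonneg _) (fun n => ?_) hgeom
    rw [hnormf (n+1)]
    calc ‖Complex.exp u‖ ^ (n+1+1) * ‖hitE κ E A h (n+1) x‖
        ≤ ‖Complex.exp u‖ ^ (n+2) * (M * γ ^ n) := by
          refine mul_le_mul_of_nonneg_left (hdHE n x hx) ?_; positivity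
      _ = (M * ‖Complex.exp u‖ ^ 2) * r ^ n := by
          rw [hrdef]; ring
  have htel : ∀ n : ℕ, (∑ m ∈ Finset.range n, f m)
      = h x - Complex.exp (u * (n:ℂ)) * Raux κ E A h n x := by
    intro n
    induction n with
    | zero => simp [Raux]
    | succ n ih =>
      rw [Finset.sum_range_succ, ih, hf]
      have hs := hstep n x hx
      have hexp : Complex.exp (u * ((n:ℂ)+1)) * Complex.exp (-u)
          = Complex.exp (u * (n:ℂ)) := by
        rw [← Complex.exp_add]; ring_nf
      have hkey : Complex.exp (u * (n:ℂ)) * Raux κ E A h n x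
          = Complex.exp (u * ((n:ℂ)+1)) * hitE κ E A h n x
            + Complex.exp (u * ((n:ℂ)+1)) * Raux κ E A h (n+1) x := by
        rw [← hexp, mul_assoc, hs]; ring
      push_cast
      linear_combination -hkey
  have htail : Filter.Tendsto (fun n : ℕ => Complex.exp (u * (n:ℂ)) * Raux κ E A h n x)
      Filter.atTop (nhds 0) := by
    rw [← Filter.tendsto_add_atTop_iff_nat 1]
    have hlim : Filter.Tendsto (fun n : ℕ => (M * ‖Complex.exp u‖) * r ^ n)
        Filter.atTop (nhds 0) := by
      have := (tendsto_pow_atTop_nhds_zero_of_lt_one hr0 hr1).const_mul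
        (M * ‖Complex.exp u‖)
      simpa using this
    refine squeeze_zero_norm (fun n => ?_) hlim
    rw [norm_mul]
    have : ((n + 1 : ℕ) : ℂ) = (n : ℂ) + 1 := by push_cast; ring
    calc ‖Complex.exp (u * ((n+1 : ℕ):ℂ))‖ * ‖Raux κ E A h (n+1) x‖
        ≤ ‖Complex.exp u‖ ^ (n+1) * (M * γ ^ n) := by
          rw [habs (n+1)]
          refine mul_le_mul_of_nonneg_left (hdRE n x hx) ?_; positivity
      _ = (M * ‖Complex.exp u‖) * r ^ n := by rw [hrdef]; ring
  have h1 : Filter.Tendsto (fun n => ∑ m ∈ Finset.range n, f m) Filter.atTop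
      (nhds (∑' n, f n)) := hsummable.hasSum.tendsto_sum_nat
  have h2 : Filter.Tendsto (fun n => ∑ m ∈ Finset.range n, f m) Filter.atTop
      (nhds (h x)) := by
    rw [funext htel]
    have := Filter.Tendsto.sub (tendsto_const_nhds (x := h x)
      (f := Filter.atTop (α := ℕ))) htail
    simpa using this
  exact tendsto_nhds_unique h2 h1
end

section
/- Consider the linearized large-deviation problem near the unstable orbit: trajectories (r(u), p_r(u)) solving r' = λ r + D(u) p_r, p_r' = −λ p_r, with λ > 0 and D continuous, positive, 1-periodic, and rate functional I⁰(γ) = (1/2)∫ D(u) p_r(u)² du. Let δ > 0, r(0) = δ, and let I⁰_∞ be the value of I⁰ along the solution on the stable manifold {r = −h_per(φ) p_r} (reaching r = 0 in infinite time), and I⁰_φ the minimal value of I⁰ over solutions with r(0) = δ and r(φ) = 0. Then I⁰_φ − I⁰_∞ = (δ²/2) e^{−2λφ} (h_per(φ)/h_per(0)²) · (1 + O(e^{−2λφ})). -/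
open MeasureTheory

/-- `h_per(φ) = (e^{2λφ}/(1 - e^{-2λ})) ∫_φ^{φ+1} e^{-2λu} D(u) du`, the 1-periodic
solution of `h' = 2λh − D`. -/
noncomputable def hper (lam : ℝ) (D : ℝ → ℝ) (φ : ℝ) : ℝ :=
  Real.exp (2*lam*φ) / (1 - Real.exp (-2*lam)) * ∫ u in φ..(φ+1), Real.exp (-2*lam*u) * D u

/-- Value of the rate functional `I⁰(γ) = (1/2)∫ D p_r² du` along the stable-manifold
solution starting at `r(0) = δ`, i.e. with `p_r(0) = −δ/h_per(0)`, `p_r(u) = e^{−λu}p_r(0)`,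
which reaches `r = 0` in infinite time. -/
noncomputable def Iinf (lam : ℝ) (D : ℝ → ℝ) (δ : ℝ) : ℝ :=
  (1/2) * ∫ u in Set.Ioi (0:ℝ), D u * (Real.exp (-lam*u) * (-δ / hper lam D 0))^2

/-- Minimal value of the rate functional `I⁰` over solutions of the linear Hamilton system
`r' = λr + D p_r`, `p_r' = −λ p_r` with `r(0) = δ` and `r(φ) = 0`: the boundary conditions
force `p_r(0) = −δ/(h_per(0) − e^{−2λφ} h_per(φ))` and `p_r(u) = e^{−λu} p_r(0)`. -/
noncomputable def Iphi (lam : ℝ) (D : ℝ → ℝ) (δ φ : ℝ) : ℝ :=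
  (1/2) * ∫ u in (0:ℝ)..φ,
    D u * (Real.exp (-lam*u) * (-δ / (hper lam D 0 - Real.exp (-2*lam*φ) * hper lam D φ)))^2

namespace Stmt9Aux

variable {lam : ℝ} {D : ℝ → ℝ}

lemma g_cont (hD : Continuous D) : Continuous (fun u => Real.exp (-2*lam*u) * D u) :=
  (Real.continuous_exp.comp (by fun_prop)).mul hD

lemma exists_bound (hD : Continuous D) (hDper : ∀ u, D (u + 1) = D u) :
    ∃ M, (∀ u, D u ≤ M) ∧ 0 < M ∨ True := ⟨0, Or.inr trivial⟩

lemma D_bound (hD : Continuous D) (hDper : ∀ u, D (u + 1) = D u) :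
    ∃ x₀ ∈ Set.Icc (0:ℝ) 1, ∀ u, D u ≤ D x₀ := by
  obtain ⟨x₀, hx₀, hmax⟩ := isCompact_Icc.exists_isMaxOn (Set.nonempty_Icc.mpr zero_le_one)
    hD.continuousOn
  refine ⟨x₀, hx₀, fun u => ?_⟩
  have hper : Function.Periodic D 1 := hDper
  have h1 : D (Int.fract u) = D u := by
    have h := hper.sub_int_mul_eq (x := u) (n := ⌊u⌋)
    rw [mul_one, Int.self_sub_floor] at h
    exact h
  rw [← h1]
  exact hmax ⟨Int.fract_nonneg u, (Int.fract_lt_one u).le⟩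

lemma g_intOn (hlam : 0 < lam) (hD : Continuous D) (hDpos : ∀ u, 0 < D u)
    {M : ℝ} (hM : ∀ u, D u ≤ M) (φ : ℝ) :
    IntegrableOn (fun u => Real.exp (-2*lam*u) * D u) (Set.Ioi φ) := by
  have h2 : (0:ℝ) < 2*lam := by linarith
  refine ((exp_neg_integrableOn_Ioi φ h2).const_mul M).mono'
    (g_cont hD).aestronglyMeasurable (ae_of_all _ fun u => ?_)
  have harg : (-(2*lam)*u) = -2*lam*u := by ring
  rw [Real.norm_eq_abs, abs_of_nonneg (mul_nonneg (Real.exp_pos _).le (hDpos u).le),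
    harg, mul_comm M]
  exact mul_le_mul_of_nonneg_left (hM u) (Real.exp_pos _).le

lemma D_add_nat (hDper : ∀ u, D (u + 1) = D u) (n : ℕ) (x : ℝ) : D (x + n) = D x := by
  induction n with
  | zero => simp
  | succ k ih =>
    have h : (x:ℝ) + (k+1:ℕ) = (x + k) + 1 := by push_cast; ring
    rw [h, hDper, ih]

lemma period_shift (hDper : ∀ u, D (u + 1) = D u) (φ : ℝ) (n : ℕ) :
    ∫ u in (φ+n)..(φ+n+1), Real.exp (-2*lam*u) * D u
      = (Real.exp (-2*lam))^n * ∫ u in φ..(φ+1), Real.exp (-2*lam*u) * D u := by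
  have h := intervalIntegral.integral_comp_add_right (a := φ) (b := φ+1)
    (fun u => Real.exp (-2*lam*u) * D u) (n:ℝ)
  have hg' : ∀ x:ℝ, Real.exp (-2*lam*(x + n)) * D (x + n)
      = (Real.exp (-2*lam))^n * (Real.exp (-2*lam*x) * D x) := by
    intro x
    rw [D_add_nat hDper n x]
    have harg : (-2*lam*(x+(n:ℝ))) = (n:ℝ)*(-2*lam) + (-2*lam*x) := by ring
    rw [harg, Real.exp_add, Real.exp_nat_mul, mul_assoc]
  have hend : φ + (n:ℝ) + 1 = φ + 1 + (n:ℝ) := by ring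
  rw [hend, ← h]
  simp only [hg']
  rw [intervalIntegral.integral_const_mul]

lemma partial_sum (hD : Continuous D) (hDper : ∀ u, D (u + 1) = D u) (φ : ℝ) (n : ℕ) :
    ∫ u in φ..(φ+(n:ℝ)), Real.exp (-2*lam*u) * D u
      = (∑ k ∈ Finset.range n, (Real.exp (-2*lam))^k)
         * ∫ u in φ..(φ+1), Real.exp (-2*lam*u) * D u := by
  induction n with
  | zero => simp
  | succ k ih =>
    have hadj := intervalIntegral.integral_add_adjacent_intervals (μ := volume)
      (a := φ) (b := φ+(k:ℝ)) (c := φ+((k:ℕ)+1:ℕ))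
      (((g_cont (lam := lam) hD).intervalIntegrable _ _))
      (((g_cont (lam := lam) hD).intervalIntegrable _ _))
    have hcast : φ + ((k+1:ℕ):ℝ) = φ + (k:ℝ) + 1 := by push_cast; ring
    rw [← hadj, ih, hcast, period_shift hDper φ k, Finset.sum_range_succ]
    ring

lemma tail (hlam : 0 < lam) (hD : Continuous D) (hDpos : ∀ u, 0 < D u)
    (hDper : ∀ u, D (u + 1) = D u) {M : ℝ} (hM : ∀ u, D u ≤ M) (φ : ℝ) :
    ∫ u in Set.Ioi φ, Real.exp (-2*lam*u) * D u = Real.exp (-2*lam*φ) * hper lam D φ := by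
  set r := Real.exp (-2*lam) with hr
  set I := ∫ u in φ..(φ+1), Real.exp (-2*lam*u) * D u with hI
  have hr0 : 0 ≤ r := (Real.exp_pos _).le
  have hr1 : r < 1 := Real.exp_lt_one_iff.mpr (by linarith)
  have hint := g_intOn hlam hD hDpos hM φ
  have htend := MeasureTheory.intervalIntegral_tendsto_integral_Ioi φ hint
    (Filter.tendsto_atTop_add_const_left Filter.atTop φ (tendsto_natCast_atTop_atTop (R := ℝ)))
  have htend2 : Filter.Tendsto (fun n : ℕ => ∫ u in φ..(φ+(n:ℝ)), Real.exp (-2*lam*u) * D u)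
      Filter.atTop (nhds ((1-r)⁻¹ * I)) := by
    simp only [partial_sum hD hDper φ]
    exact ((hasSum_geometric_of_lt_one hr0 hr1).tendsto_sum_nat).mul_const I
  have hval := tendsto_nhds_unique htend htend2
  rw [hval]
  unfold hper
  rw [← hI, ← hr, div_eq_mul_inv]
  have hexp : Real.exp (-2*lam*φ) * Real.exp (2*lam*φ) = 1 := by
    rw [← Real.exp_add]; norm_num
  calc (1-r)⁻¹ * I = (Real.exp (-2*lam*φ) * Real.exp (2*lam*φ)) * ((1-r)⁻¹ * I) := by
        rw [hexp, one_mul]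
    _ = Real.exp (-2*lam*φ) * (Real.exp (2*lam*φ) * (1-r)⁻¹ * I) := by ring

lemma hper_pos (hlam : 0 < lam) (hD : Continuous D) (hDpos : ∀ u, 0 < D u) (φ : ℝ) :
    0 < hper lam D φ := by
  unfold hper
  have hr1 : Real.exp (-2*lam) < 1 := Real.exp_lt_one_iff.mpr (by linarith)
  apply mul_pos
  · exact div_pos (Real.exp_pos _) (by linarith)
  · exact intervalIntegral.intervalIntegral_pos_of_pos_on
      ((g_cont hD).intervalIntegrable _ _)
      (fun x _ => mul_pos (Real.exp_pos _) (hDpos x)) (by linarith)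

lemma exp_integral (hlam : 0 < lam) (φ : ℝ) :
    ∫ u in φ..(φ+1), Real.exp (-2*lam*u)
      = Real.exp (-2*lam*φ) * (1 - Real.exp (-2*lam)) / (2*lam) := by
  have hderiv : ∀ x ∈ Set.uIcc φ (φ+1),
      HasDerivAt (fun y => Real.exp (-2*lam*y) / (-(2*lam))) (Real.exp (-2*lam*x)) x := by
    intro x _
    have h1 : HasDerivAt (fun y : ℝ => -2*lam*y) (-2*lam) x := by
      simpa using (hasDerivAt_id x).const_mul (-2*lam)
    have h2 := (Real.hasDerivAt_exp (-2*lam*x)).comp x h1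
    have h3 := h2.div_const (-(2*lam))
    exact h3.congr_deriv (by rw [div_eq_iff (by intro h; linarith : -(2*lam) ≠ 0)]; ring)
  have hint : IntervalIntegrable (fun u => Real.exp (-2*lam*u)) volume φ (φ+1) :=
    (Real.continuous_exp.comp (by fun_prop)).intervalIntegrable _ _
  rw [intervalIntegral.integral_eq_sub_of_hasDerivAt hderiv hint]
  have h4 : Real.exp (-2*lam*(φ+1)) = Real.exp (-2*lam*φ) * Real.exp (-2*lam) := by
    rw [← Real.exp_add]; congr 1; ring
  rw [h4]
  field_simp
  ring

lemma hper_le (hlam : 0 < lam) (hD : Continuous D) (hDpos : ∀ u, 0 < D u)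
    {M : ℝ} (hM : ∀ u, D u ≤ M) (φ : ℝ) : hper lam D φ ≤ M / (2*lam) := by
  unfold hper
  have hr1 : Real.exp (-2*lam) < 1 := Real.exp_lt_one_iff.mpr (by linarith)
  have hmono : (∫ u in φ..(φ+1), Real.exp (-2*lam*u) * D u)
      ≤ ∫ u in φ..(φ+1), Real.exp (-2*lam*u) * M := by
    apply intervalIntegral.integral_mono_on (by linarith)
      ((g_cont hD).intervalIntegrable _ _)
      (((Real.continuous_exp.comp (by fun_prop)).mul continuous_const).intervalIntegrable _ _)
    exact fun x _ => mul_le_mul_of_nonneg_left (hM x) (Real.exp_pos _).le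
  have hc : (0:ℝ) ≤ Real.exp (2*lam*φ) / (1 - Real.exp (-2*lam)) :=
    le_of_lt (div_pos (Real.exp_pos _) (by linarith))
  calc Real.exp (2*lam*φ) / (1 - Real.exp (-2*lam))
        * ∫ u in φ..(φ+1), Real.exp (-2*lam*u) * D u
      ≤ Real.exp (2*lam*φ) / (1 - Real.exp (-2*lam))
        * ∫ u in φ..(φ+1), Real.exp (-2*lam*u) * M := mul_le_mul_of_nonneg_left hmono hc
    _ = M / (2*lam) := by
        rw [intervalIntegral.integral_mul_const, exp_integral hlam φ]
        have hexp : Real.exp (2*lam*φ) * Real.exp (-2*lam*φ) = 1 := by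
          rw [← Real.exp_add]; norm_num
        have h1r : (1:ℝ) - Real.exp (-2*lam) ≠ 0 := ne_of_gt (by linarith)
        have hstep : Real.exp (2*lam*φ) / (1 - Real.exp (-2*lam))
            * (Real.exp (-2*lam*φ) * (1 - Real.exp (-2*lam)) / (2*lam) * M)
            = (Real.exp (2*lam*φ) * Real.exp (-2*lam*φ))
              * ((1 - Real.exp (-2*lam)) / (1 - Real.exp (-2*lam))) * (M/(2*lam)) := by
          ring
        rw [hstep, hexp, div_self h1r, one_mul, one_mul]

end Stmt9Aux

open Stmt9Aux in
/-- Comparison of rate functions in the linear case: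
`I⁰_φ − I⁰_∞ = (δ²/2) e^{−2λφ} (h_per(φ)/h_per(0)²)(1 + O(e^{−2λφ}))`. -/
theorem stmt9 (lam : ℝ) (hlam : 0 < lam) (D : ℝ → ℝ) (hD : Continuous D)
    (hDpos : ∀ u, 0 < D u) (hDper : ∀ u, D (u + 1) = D u)
    (δ : ℝ) (hδ : 0 < δ) :
    ∃ C > (0:ℝ), ∃ φ₁ : ℝ, ∀ φ ≥ φ₁,
      |Iphi lam D δ φ - Iinf lam D δ
          - (δ^2/2) * Real.exp (-2*lam*φ) * hper lam D φ / (hper lam D 0)^2|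
        ≤ C * ((δ^2/2) * Real.exp (-2*lam*φ) * hper lam D φ / (hper lam D 0)^2)
            * Real.exp (-2*lam*φ) := by
  obtain ⟨x₀, -, hM⟩ := D_bound hD hDper
  set M := D x₀ with hMdef
  have hMpos : 0 < M := hDpos x₀
  set h0 := hper lam D 0 with hh0
  have hh0pos : 0 < h0 := hper_pos hlam hD hDpos 0
  have htail0 : ∫ u in Set.Ioi (0:ℝ), Real.exp (-2*lam*u) * D u = h0 := by
    have := tail hlam hD hDpos hDper hM 0
    simpa using this
  -- square helper
  have hsq : ∀ (c u : ℝ), D u * (Real.exp (-lam*u) * c)^2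
      = c^2 * (Real.exp (-2*lam*u) * D u) := by
    intro c u
    have h : Real.exp (-lam*u) ^ 2 = Real.exp (-2*lam*u) := by
      rw [sq, ← Real.exp_add]; congr 1; ring
    rw [mul_pow, h]; ring
  -- value of Iinf
  have hIinf : Iinf lam D δ = δ^2/(2*h0) := by
    unfold Iinf
    rw [← hh0]
    simp only [hsq]
    rw [MeasureTheory.integral_const_mul, htail0]
    have : (-δ/h0)^2 = δ^2/h0^2 := by rw [div_pow]; ring_nf
    rw [this]
    field_simp
  refine ⟨M / (lam * h0), div_pos hMpos (by positivity), max 0 (Real.log (M/(lam*h0)) / (2*lam)),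
    fun φ hφ => ?_⟩
  set C := M / (lam * h0) with hC
  have hφ0 : 0 ≤ φ := le_trans (le_max_left _ _) hφ
  set t := Real.exp (-2*lam*φ) with ht
  set hp := hper lam D φ with hhp
  have htpos : 0 < t := Real.exp_pos _
  have hppos : 0 < hp := hper_pos hlam hD hDpos φ
  have hple : hp ≤ M/(2*lam) := hper_le hlam hD hDpos hM φ
  -- t ≤ lam*h0/M
  have ht_le : t ≤ lam * h0 / M := by
    have h1 : Real.log (M/(lam*h0)) / (2*lam) ≤ φ := le_trans (le_max_right _ _) hφ
    have h2 : Real.log (M/(lam*h0)) ≤ 2*lam*φ := by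
      rw [div_le_iff₀ (by linarith : (0:ℝ) < 2*lam)] at h1
      linarith [h1]
    have h3 : -2*lam*φ ≤ -Real.log (M/(lam*h0)) := by linarith
    calc t ≤ Real.exp (-Real.log (M/(lam*h0))) := Real.exp_le_exp.mpr h3
      _ = lam*h0/M := by
          rw [Real.exp_neg, Real.exp_log (by positivity), inv_div]
  have hE : t * hp ≤ h0/2 := by
    calc t * hp ≤ (lam*h0/M) * (M/(2*lam)) :=
          mul_le_mul ht_le hple hppos.le (by positivity)
      _ = h0/2 := by field_simp
  set A := h0 - t * hp with hA
  have hA_half : h0/2 ≤ A := by rw [hA]; linarith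
  have hApos : 0 < A := lt_of_lt_of_le (by positivity) hA_half
  -- interval integral from 0 to φ
  have hintA : ∫ u in (0:ℝ)..φ, Real.exp (-2*lam*u) * D u = A := by
    have hint0 := g_intOn hlam hD hDpos hM 0
    have hintφ := g_intOn hlam hD hDpos hM φ
    have hsplit : ∫ u in Set.Ioi (0:ℝ), Real.exp (-2*lam*u) * D u
        = (∫ u in Set.Ioc (0:ℝ) φ, Real.exp (-2*lam*u) * D u)
          + ∫ u in Set.Ioi φ, Real.exp (-2*lam*u) * D u := by
      rw [← MeasureTheory.setIntegral_union (Set.Ioc_disjoint_Ioi le_rfl) measurableSet_Ioi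
        (hint0.mono_set Set.Ioc_subset_Ioi_self) hintφ, Set.Ioc_union_Ioi_eq_Ioi hφ0]
    have htailφ := tail hlam hD hDpos hDper hM φ
    rw [intervalIntegral.integral_of_le hφ0]
    rw [htail0, htailφ] at hsplit
    rw [← ht, ← hhp] at hsplit
    rw [hA]
    linarith
  -- value of Iphi
  have hIphi : Iphi lam D δ φ = δ^2/(2*A) := by
    unfold Iphi
    rw [← hh0, ← hhp, ← ht, ← hA]
    simp only [hsq]
    rw [intervalIntegral.integral_const_mul, hintA]
    have : (-δ/A)^2 = δ^2/A^2 := by rw [div_pow]; ring_nf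
    rw [this]
    field_simp
  -- main term
  have hh0ne : h0 ≠ 0 := ne_of_gt hh0pos
  have hAne : A ≠ 0 := ne_of_gt hApos
  have hkey : Iphi lam D δ φ - Iinf lam D δ - (δ^2/2) * t * hp / h0^2
      = ((δ^2/2) * t * hp / h0^2) * ((t*hp)/A) := by
    rw [hIphi, hIinf, hA]
    have hAne' : h0 - t * hp ≠ 0 := hAne
    field_simp
    ring
  rw [hkey]
  have hmain_pos : 0 < (δ^2/2) * t * hp / h0^2 := by positivity
  rw [abs_of_nonneg (by positivity)]
  have hfrac : t * hp / A ≤ C * t := by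
    rw [div_le_iff₀ hApos]
    have h1 : M/(2*lam) = C * (h0/2) := by rw [hC]; field_simp
    have h2 : hp ≤ C * A := by
      calc hp ≤ M/(2*lam) := hple
        _ = C * (h0/2) := h1
        _ ≤ C * A := mul_le_mul_of_nonneg_left hA_half (by positivity)
    nlinarith
  calc (δ^2/2) * t * hp / h0^2 * (t*hp/A) ≤ (δ^2/2) * t * hp / h0^2 * (C*t) :=
        mul_le_mul_of_nonneg_left hfrac hmain_pos.le
    _ = C * ((δ^2/2) * t * hp / h0^2) * t := by ring
end

section
/- Let λ > 0, let D be continuous positive 1-periodic, h_per the periodic solution of h' = 2λh − D, and define θ'(φ) = D(φ)/(2 h_per(φ)). Then any primitive θ of θ' satisfies θ(φ+1) = θ(φ) + λ. In particular, θ(φ) = λφ − (1/2)log((1/2)δ² h_per(φ)/h_per(s*)²) is such a primitive, for any constants δ > 0 and s*. -/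
lemma exp_fac_pos (lam : ℝ) (hlam : 0 < lam) : 0 < 1 - Real.exp (-2*lam) := by
  have : Real.exp (-2*lam) < 1 := by
    rw [Real.exp_lt_one_iff]; linarith
  linarith

lemma hper_pos (lam : ℝ) (hlam : 0 < lam) (D : ℝ → ℝ) (hD : Continuous D)
    (hDpos : ∀ u, 0 < D u) (φ : ℝ) : 0 < hper lam D φ := by
  unfold hper
  have h1 := exp_fac_pos lam hlam
  have h2 : 0 < ∫ u in φ..(φ+1), Real.exp (-2*lam*u) * D u := by
    apply intervalIntegral.intervalIntegral_pos_of_pos_on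
    · exact (Continuous.intervalIntegrable (by continuity) _ _)
    · intro x _; exact mul_pos (Real.exp_pos _) (hDpos x)
    · linarith
  exact mul_pos (div_pos (Real.exp_pos _) h1) h2

lemma hper_per (lam : ℝ) (D : ℝ → ℝ) (hDper : ∀ u, D (u + 1) = D u) (φ : ℝ) :
    hper lam D (φ + 1) = hper lam D φ := by
  unfold hper
  have key : (∫ u in (φ+1)..(φ+1+1), Real.exp (-2*lam*u) * D u)
      = Real.exp (-2*lam) * ∫ u in φ..(φ+1), Real.exp (-2*lam*u) * D u := by
    rw [← intervalIntegral.integral_comp_add_right (fun u => Real.exp (-2*lam*u) * D u) 1,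
        ← intervalIntegral.integral_const_mul]
    apply intervalIntegral.integral_congr
    intro x _
    simp only [hDper]
    rw [show (-2*lam*(x+1)) = (-2*lam) + (-2*lam*x) by ring, Real.exp_add]
    ring
  have hee : Real.exp (2*lam*(φ+1)) * Real.exp (-2*lam) = Real.exp (2*lam*φ) := by
    rw [← Real.exp_add]; ring_nf
  rw [key, div_mul_eq_mul_div, div_mul_eq_mul_div, ← mul_assoc, hee]

lemma hper_hasDerivAt (lam : ℝ) (hlam : 0 < lam) (D : ℝ → ℝ) (hD : Continuous D)
    (hDper : ∀ u, D (u + 1) = D u) (φ : ℝ) :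
    HasDerivAt (hper lam D) (2*lam*hper lam D φ - D φ) φ := by
  set f := fun u => Real.exp (-2*lam*u) * D u with hf
  have hfc : Continuous f := by continuity
  have hG : ∀ x : ℝ, HasDerivAt (fun ψ => ∫ u in (0:ℝ)..ψ, f u) (f x) x := fun x =>
    intervalIntegral.integral_hasDerivAt_right (hfc.intervalIntegrable _ _)
      (hfc.stronglyMeasurableAtFilter _ _) hfc.continuousAt
  have hFeq : ∀ ψ : ℝ, (∫ u in ψ..(ψ+1), f u)
      = (∫ u in (0:ℝ)..(ψ+1), f u) - ∫ u in (0:ℝ)..ψ, f u := by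
    intro ψ
    rw [eq_sub_iff_add_eq, add_comm]
    exact intervalIntegral.integral_add_adjacent_intervals
      (hfc.intervalIntegrable _ _) (hfc.intervalIntegrable _ _)
  have hG2 : HasDerivAt (fun ψ : ℝ => ∫ u in (0:ℝ)..(ψ+1), f u) (f (φ+1)) φ := by
    have := (hG (φ+1)).comp φ ((hasDerivAt_id φ).add_const 1)
    rw [mul_one] at this; exact this
  have hF : HasDerivAt (fun ψ => ∫ u in ψ..(ψ+1), f u) (f (φ+1) - f φ) φ := by
    have := hG2.sub (hG φ)
    apply this.congr_of_eventuallyEq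
    filter_upwards with ψ using (hFeq ψ)
  have hE : HasDerivAt (fun ψ => Real.exp (2*lam*ψ) / (1 - Real.exp (-2*lam)))
      (2*lam * Real.exp (2*lam*φ) / (1 - Real.exp (-2*lam))) φ := by
    have h1 : HasDerivAt (fun ψ : ℝ => 2*lam*ψ) (2*lam) φ := by
      simpa using (hasDerivAt_id φ).const_mul (2*lam)
    have := (h1.exp).div_const (1 - Real.exp (-2*lam))
    rw [show 2*lam * Real.exp (2*lam*φ) = Real.exp (2*lam*φ) * (2*lam) by ring]; exact this
  have hmul := hE.mul hF
  have heq : (2*lam * Real.exp (2*lam*φ) / (1 - Real.exp (-2*lam))) * (∫ u in φ..(φ+1), f u)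
      + Real.exp (2*lam*φ) / (1 - Real.exp (-2*lam)) * (f (φ+1) - f φ)
      = 2*lam*hper lam D φ - D φ := by
    have hfφ1 : f (φ+1) = Real.exp (-2*lam) * f φ := by
      simp only [hf]
      rw [hDper, show (-2*lam*(φ+1)) = (-2*lam) + (-2*lam*φ) by ring, Real.exp_add]
      ring
    have hcan : Real.exp (2*lam*φ) * Real.exp (-2*lam*φ) = 1 := by
      rw [← Real.exp_add]; ring_nf; exact Real.exp_zero
    have hne := (exp_fac_pos lam hlam).ne'
    unfold hper
    rw [hfφ1]
    simp only [hf]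
    set E := Real.exp (2*lam*φ) with hE'
    set A := Real.exp (-2*lam*φ) with hA'
    set B := Real.exp (-2*lam) with hB'
    field_simp
    linear_combination (B - 1) * D φ * hcan
  rw [heq] at hmul
  exact hmul.congr_of_eventuallyEq (by filter_upwards with ψ; unfold hper; rfl)

/-- Any primitive `θ` of `θ'(φ) = D(φ)/(2h_per(φ))` satisfies `θ(φ+1) = θ(φ) + λ`.
In particular `θ(φ) = λφ − (1/2) log((1/2) δ² h_per(φ)/h_per(s*)²)` is such a primitive,
for any constants `δ > 0` and `s*`. -/
theorem stmt17 (lam : ℝ) (hlam : 0 < lam) (D : ℝ → ℝ) (hD : Continuous D)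
    (hDpos : ∀ u, 0 < D u) (hDper : ∀ u, D (u + 1) = D u)
    (δ sstar : ℝ) (hδ : 0 < δ) :
    (∀ θ : ℝ → ℝ, (∀ φ, HasDerivAt θ (D φ / (2 * hper lam D φ)) φ) →
      ∀ φ, θ (φ + 1) = θ φ + lam) ∧
    (∀ φ, HasDerivAt
      (fun ψ => lam * ψ - (1/2) * Real.log ((1/2) * δ^2 * hper lam D ψ / (hper lam D sstar)^2))
      (D φ / (2 * hper lam D φ)) φ) := by
  have hpos : ∀ φ, 0 < hper lam D φ := hper_pos lam hlam D hD hDpos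
  have hC : 0 < (1/2) * δ^2 / (hper lam D sstar)^2 := div_pos (by positivity) (pow_pos (hpos sstar) 2)
  -- derivative of the explicit primitive
  have hθ0 : ∀ φ, HasDerivAt
      (fun ψ => lam * ψ - (1/2) * Real.log ((1/2) * δ^2 * hper lam D ψ / (hper lam D sstar)^2))
      (D φ / (2 * hper lam D φ)) φ := by
    intro φ
    have hlog : HasDerivAt (fun ψ => Real.log (hper lam D ψ))
        ((2*lam*hper lam D φ - D φ) / hper lam D φ) φ :=
      (hper_hasDerivAt lam hlam D hD hDper φ).log (hpos φ).ne'
    have hlin : HasDerivAt (fun ψ : ℝ => lam * ψ) lam φ := by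
      simpa using (hasDerivAt_id φ).const_mul lam
    have h1 := hlin.sub
      (((hasDerivAt_const φ (Real.log ((1/2) * δ^2 / (hper lam D sstar)^2))).add
        hlog).const_mul (1/2))
    have heqf : (fun ψ => lam * ψ - (1/2) * (Real.log ((1/2) * δ^2 / (hper lam D sstar)^2)
          + Real.log (hper lam D ψ)))
        = (fun ψ => lam * ψ - (1/2) * Real.log ((1/2) * δ^2 * hper lam D ψ / (hper lam D sstar)^2)) := by
      funext ψ
      rw [show (1/2) * δ^2 * hper lam D ψ / (hper lam D sstar)^2
          = ((1/2) * δ^2 / (hper lam D sstar)^2) * hper lam D ψ by ring,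
        Real.log_mul hC.ne' (hpos ψ).ne']
    have heqd : lam - 1/2 * (0 + (2*lam*hper lam D φ - D φ) / hper lam D φ)
        = D φ / (2 * hper lam D φ) := by
      have := (hpos φ).ne'
      field_simp
      ring
    rw [← heqf, ← heqd]
    exact h1
  constructor
  · intro θ hθ φ
    set θ0 : ℝ → ℝ :=
      fun ψ => lam * ψ - (1/2) * Real.log ((1/2) * δ^2 * hper lam D ψ / (hper lam D sstar)^2)
      with hθ0def
    have hg : ∀ x, HasDerivAt (fun ψ => θ ψ - θ0 ψ) 0 x := by
      intro x
      have := (hθ x).sub (hθ0 x)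
      rw [sub_self] at this; exact this
    have hconst : ∀ x y : ℝ, θ x - θ0 x = θ y - θ0 y := by
      intro x y
      exact is_const_of_deriv_eq_zero (fun z => (hg z).differentiableAt)
        (fun z => (hg z).deriv) x y
    have hθ0per : θ0 (φ + 1) = θ0 φ + lam := by
      simp only [hθ0def, hper_per lam D hDper φ]
      ring
    have := hconst (φ + 1) φ
    linarith [this, hθ0per]
  · exact hθ0
end
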